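/- Verification of the explicit 2×2 hyperbolic kernels: with constant coefficients c₁,c₂,c₃,c₄ and c₂c₃ > 0, the functions K^{uu}(x,ξ) = e^{(c₄-c₁)(x-ξ)/(2ε)} F(x,ξ) and K^{uv}(x,ξ) = (c₂/(2ε)) e^{(c₄-c₁)(x-ξ)/(2ε)} H(x,ξ), where F(x,ξ) = -(√(c₂c₃)/(2ε))√((x+ξ)/(x-ξ)) I₁(√(c₂c₃(x²-ξ²))/ε) and H(x,ξ) = -I₀(√(c₂c₃(x²-ξ²))/ε) for x > 0, satisfy K^{uu}_x + K^{uu}_ξ = ((c₁(ξ)-c₁(x))/ε)K^{uu} + (c₃/ε)K^{uv} (which for constant c₁ reads K^{uu}_x + K^{uu}_ξ = (c₃/ε)K^{uv}) and K^{uv}_x - K^{uv}_ξ = ((c₄-c₁)/ε)K^{uv} + (c₂/ε)K^{uu} on the interior of T₁. -/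

import Mathlib

open Real

/-- Verification of the explicit 2×2 hyperbolic kernels: with constant coefficients and
`c₂c₃ > 0`, the functions `K^{uu} = e^{(c₄-c₁)(x-ξ)/(2ε)} F` and
`K^{uv} = (c₂/(2ε)) e^{(c₄-c₁)(x-ξ)/(2ε)} H`, built from the modified Bessel functions
`I₀, I₁` (characterized by `I₀' = I₁` and `I₁'(z) = I₀(z) - I₁(z)/z`), satisfy the kernel
equations `K^{uu}_x + K^{uu}_ξ = (c₃/ε)K^{uv}` and
`K^{uv}_x - K^{uv}_ξ = ((c₄-c₁)/ε)K^{uv} + (c₂/ε)K^{uu}` on the interior of `T₁`. -/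
theorem explicit_hyperbolic_kernel_verification
    (L eps c₁ c₂ c₃ c₄ : ℝ) (hL : 0 < L) (heps : 0 < eps) (hc : 0 < c₂ * c₃)
    (I0 I1 : ℝ → ℝ)
    (hI0d : Differentiable ℝ I0) (hI1d : Differentiable ℝ I1)
    (hI0' : ∀ z : ℝ, deriv I0 z = I1 z)
    (hI1' : ∀ z : ℝ, z ≠ 0 → deriv I1 z = I0 z - I1 z / z)
    (F H Kuu Kuv : ℝ → ℝ → ℝ)
    (hF : ∀ x ξ : ℝ, F x ξ = -(Real.sqrt (c₂ * c₃) / (2 * eps)) *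
      Real.sqrt ((x + ξ) / (x - ξ)) * I1 (Real.sqrt (c₂ * c₃ * (x ^ 2 - ξ ^ 2)) / eps))
    (hH : ∀ x ξ : ℝ, H x ξ = -I0 (Real.sqrt (c₂ * c₃ * (x ^ 2 - ξ ^ 2)) / eps))
    (hKuu : ∀ x ξ : ℝ, Kuu x ξ = Real.exp ((c₄ - c₁) * (x - ξ) / (2 * eps)) * F x ξ)
    (hKuv : ∀ x ξ : ℝ, Kuv x ξ =
      c₂ / (2 * eps) * Real.exp ((c₄ - c₁) * (x - ξ) / (2 * eps)) * H x ξ) :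
    ∀ x ξ : ℝ, 0 < x → x ≤ L → -x < ξ → ξ < x →
      (deriv (fun x' => Kuu x' ξ) x + deriv (fun ξ' => Kuu x ξ') ξ =
        c₃ / eps * Kuv x ξ) ∧
      (deriv (fun x' => Kuv x' ξ) x - deriv (fun ξ' => Kuv x ξ') ξ =
        (c₄ - c₁) / eps * Kuv x ξ + c₂ / eps * Kuu x ξ) := by

  intro x ξ hx hxL hξ1 hξ2
  have hd : 0 < x - ξ := by linarith
  have hs : 0 < x + ξ := by linarith
  have hsq : 0 < x ^ 2 - ξ ^ 2 := by nlinarith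
  have hin : 0 < c₂ * c₃ * (x ^ 2 - ξ ^ 2) := mul_pos hc hsq
  have hz0 : Real.sqrt (c₂ * c₃ * (x ^ 2 - ξ ^ 2)) / eps ≠ 0 :=
    ne_of_gt (div_pos (Real.sqrt_pos.2 hin) heps)
  -- Bessel derivatives at the point z
  have hI1z : HasDerivAt I1
      (I0 (Real.sqrt (c₂ * c₃ * (x ^ 2 - ξ ^ 2)) / eps) -
        I1 (Real.sqrt (c₂ * c₃ * (x ^ 2 - ξ ^ 2)) / eps) /
          (Real.sqrt (c₂ * c₃ * (x ^ 2 - ξ ^ 2)) / eps))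
      (Real.sqrt (c₂ * c₃ * (x ^ 2 - ξ ^ 2)) / eps) := by
    have h := (hI1d (Real.sqrt (c₂ * c₃ * (x ^ 2 - ξ ^ 2)) / eps)).hasDerivAt
    rwa [hI1' _ hz0] at h
  have hI0z : HasDerivAt I0
      (I1 (Real.sqrt (c₂ * c₃ * (x ^ 2 - ξ ^ 2)) / eps))
      (Real.sqrt (c₂ * c₃ * (x ^ 2 - ξ ^ 2)) / eps) := by
    have h := (hI0d (Real.sqrt (c₂ * c₃ * (x ^ 2 - ξ ^ 2)) / eps)).hasDerivAt
    rwa [hI0' _] at h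
  -- x-direction pieces
  have hlinX : HasDerivAt (fun x' => (c₄ - c₁) * (x' - ξ) / (2 * eps))
      ((c₄ - c₁) * 1 / (2 * eps)) x :=
    (((hasDerivAt_id x).sub_const ξ).const_mul (c₄ - c₁)).div_const (2 * eps)
  have hEX := hlinX.exp
  have hqX : HasDerivAt (fun x' => (x' + ξ) / (x' - ξ))
      ((1 * (x - ξ) - (x + ξ) * 1) / (x - ξ) ^ 2) x :=
    ((hasDerivAt_id x).add_const ξ).div ((hasDerivAt_id x).sub_const ξ) hd.ne'
  have hWX := hqX.sqrt (ne_of_gt (div_pos hs hd))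
  have hpX : HasDerivAt (fun x' => c₂ * c₃ * (x' ^ 2 - ξ ^ 2))
      (c₂ * c₃ * (2 * x)) x := by
    have h := (((hasDerivAt_pow 2 x).sub_const (ξ ^ 2)).const_mul (c₂ * c₃))
    refine h.congr_deriv ?_
    push_cast
    ring
  have hzX := (hpX.sqrt (ne_of_gt hin)).div_const eps
  have hI1X : HasDerivAt
      (fun x' => I1 (Real.sqrt (c₂ * c₃ * (x' ^ 2 - ξ ^ 2)) / eps)) _ x :=
    HasDerivAt.comp x hI1z hzX
  have hI0X : HasDerivAt
      (fun x' => I0 (Real.sqrt (c₂ * c₃ * (x' ^ 2 - ξ ^ 2)) / eps)) _ x :=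
    HasDerivAt.comp x hI0z hzX
  have hKuuX : HasDerivAt (fun x' =>
      Real.exp ((c₄ - c₁) * (x' - ξ) / (2 * eps)) *
        (-(Real.sqrt (c₂ * c₃) / (2 * eps)) * Real.sqrt ((x' + ξ) / (x' - ξ)) *
          I1 (Real.sqrt (c₂ * c₃ * (x' ^ 2 - ξ ^ 2)) / eps))) _ x :=
    hEX.mul ((hWX.const_mul (-(Real.sqrt (c₂ * c₃) / (2 * eps)))).mul hI1X)
  have hKuvX : HasDerivAt (fun x' =>
      c₂ / (2 * eps) * Real.exp ((c₄ - c₁) * (x' - ξ) / (2 * eps)) *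
        -I0 (Real.sqrt (c₂ * c₃ * (x' ^ 2 - ξ ^ 2)) / eps)) _ x :=
    (hEX.const_mul (c₂ / (2 * eps))).mul hI0X.neg
  -- ξ-direction pieces
  have hlinY : HasDerivAt (fun ξ' => (c₄ - c₁) * (x - ξ') / (2 * eps))
      ((c₄ - c₁) * -1 / (2 * eps)) ξ :=
    (((hasDerivAt_id ξ).const_sub x).const_mul (c₄ - c₁)).div_const (2 * eps)
  have hEY := hlinY.exp
  have hqY : HasDerivAt (fun ξ' => (x + ξ') / (x - ξ'))
      ((1 * (x - ξ) - (x + ξ) * -1) / (x - ξ) ^ 2) ξ :=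
    ((hasDerivAt_id ξ).const_add x).div ((hasDerivAt_id ξ).const_sub x) hd.ne'
  have hWY := hqY.sqrt (ne_of_gt (div_pos hs hd))
  have hpY : HasDerivAt (fun ξ' => c₂ * c₃ * (x ^ 2 - ξ' ^ 2))
      (c₂ * c₃ * (-(2 * ξ))) ξ := by
    have h := (((hasDerivAt_pow 2 ξ).const_sub (x ^ 2)).const_mul (c₂ * c₃))
    refine h.congr_deriv ?_
    push_cast
    ring
  have hzY := (hpY.sqrt (ne_of_gt hin)).div_const eps
  have hI1Y : HasDerivAt
      (fun ξ' => I1 (Real.sqrt (c₂ * c₃ * (x ^ 2 - ξ' ^ 2)) / eps)) _ ξ :=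
    HasDerivAt.comp ξ hI1z hzY
  have hI0Y : HasDerivAt
      (fun ξ' => I0 (Real.sqrt (c₂ * c₃ * (x ^ 2 - ξ' ^ 2)) / eps)) _ ξ :=
    HasDerivAt.comp ξ hI0z hzY
  have hKuuY : HasDerivAt (fun ξ' =>
      Real.exp ((c₄ - c₁) * (x - ξ') / (2 * eps)) *
        (-(Real.sqrt (c₂ * c₃) / (2 * eps)) * Real.sqrt ((x + ξ') / (x - ξ')) *
          I1 (Real.sqrt (c₂ * c₃ * (x ^ 2 - ξ' ^ 2)) / eps))) _ ξ :=
    hEY.mul ((hWY.const_mul (-(Real.sqrt (c₂ * c₃) / (2 * eps)))).mul hI1Y)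
  have hKuvY : HasDerivAt (fun ξ' =>
      c₂ / (2 * eps) * Real.exp ((c₄ - c₁) * (x - ξ') / (2 * eps)) *
        -I0 (Real.sqrt (c₂ * c₃ * (x ^ 2 - ξ' ^ 2)) / eps)) _ ξ :=
    (hEY.const_mul (c₂ / (2 * eps))).mul hI0Y.neg
  -- rewrite the goal with the computed derivatives
  simp only [hKuu, hF, hKuv, hH]
  rw [hKuuX.deriv, hKuuY.deriv, hKuvX.deriv, hKuvY.deriv]
  -- split the square roots
  rw [Real.sqrt_div hs.le, show c₂ * c₃ * (x ^ 2 - ξ ^ 2) =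
      c₂ * c₃ * ((x + ξ) * (x - ξ)) by ring,
    Real.sqrt_mul hc.le, Real.sqrt_mul hs.le]
  set a := Real.sqrt (c₂ * c₃) with ha
  set p := Real.sqrt (x + ξ) with hp
  set q := Real.sqrt (x - ξ) with hq
  have ha2 : a ^ 2 = c₂ * c₃ := Real.sq_sqrt hc.le
  have hp2 : p ^ 2 = x + ξ := Real.sq_sqrt hs.le
  have hq2 : q ^ 2 = x - ξ := Real.sq_sqrt hd.le
  have hap : 0 < a := Real.sqrt_pos.2 hc
  have hpp : 0 < p := Real.sqrt_pos.2 hs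
  have hqp : 0 < q := Real.sqrt_pos.2 hd
  clear_value a p q
  have hc2 : c₂ ≠ 0 := by
    intro h
    rw [h, zero_mul] at hc
    exact lt_irrefl 0 hc
  have hc3 : c₃ = a ^ 2 / c₂ := by
    rw [eq_div_iff hc2]
    linarith [ha2]
  subst hc3
  have hx2 : x = (p ^ 2 + q ^ 2) / 2 := by linarith
  subst hx2
  have hξ2 : ξ = (p ^ 2 - q ^ 2) / 2 := by linarith
  subst hξ2
  constructor
  · field_simp
    ring
  · field_simp
    ring
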